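/- Let p₀ ∈ (0,1) and σ_M ∈ (0,1) with 1 − p₀ + σ_M ≤ 1. Let l_R be a {0,1}-valued process adapted to the filtration (𝓕_t) such that for every t ∈ ℕ, P(l_R(t+1) = 0 ∣ 𝓕_t) ≤ p₀ almost surely, and let l_M be a {0,1}-valued process with ∑_{k=1}^∞ P( ∑_{t=0}^{k-1} l_M(t) < σ_M · k ) < ∞ and such that l_R(t)·l_M(t) = 0 for all t ∈ ℕ almost surely (malicious attacks never coincide with random losses). Define the overall loss process l(t) = l_R(t) + (1 − l_R(t))·l_M(t) (so here l(t) = l_R(t) + l_M(t)) and L(k) = ∑_{t=0}^{k-1} l(t). Then for every σ ∈ (0, 1 − p₀ + σ_M), the series ∑_{k=1}^∞ P( L(k) < σ·k ) is finite. -/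

import Mathlib

open MeasureTheory Filter

lemma ptwise (a b : ℝ) (hb : b^2 ≤ 1) :
    (a+b)^4 ≤ a^4 + 4*a^3*b + 8*a^2 + 3 := by
  nlinarith [sq_nonneg (a-b), sq_nonneg (a*b), sq_nonneg a, sq_nonneg b,
    mul_nonneg (sq_nonneg b) (sq_nonneg (a-b)), sq_nonneg (a+b)]

lemma aux_moment4 {Ω : Type*} [MeasurableSpace Ω] (μ : Measure Ω) [IsProbabilityMeasure μ]
    (ℱ : Filtration ℕ (inferInstance : MeasurableSpace Ω)) (Z : ℕ → Ω → ℝ)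
    (hSM : ∀ t, StronglyMeasurable[ℱ (t+1)] (Z t))
    (hbd : ∀ t, ∀ᵐ ω ∂μ, |Z t ω| ≤ 1)
    (hcond : ∀ t, μ[Z t | ℱ t] =ᵐ[μ] 0) :
    ∀ n : ℕ, (∫ ω, (∑ t ∈ Finset.range n, Z t ω)^4 ∂μ) ≤ 4 * (n:ℝ)^2 := by
  set S : ℕ → Ω → ℝ := fun n ω => ∑ t ∈ Finset.range n, Z t ω with hS
  have hSMm : ∀ t, StronglyMeasurable (Z t) := fun t => (hSM t).mono (ℱ.le _)
  have hSMS : ∀ n, StronglyMeasurable[ℱ n] (S n) := by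
    intro n
    apply Finset.stronglyMeasurable_fun_sum
    intro t ht
    exact (hSM t).mono (ℱ.mono (Finset.mem_range.mp ht))
  have hSMSm : ∀ n, StronglyMeasurable (S n) := fun n => (hSMS n).mono (ℱ.le _)
  have hbdS : ∀ n, ∀ᵐ ω ∂μ, |S n ω| ≤ n := by
    intro n
    have := ae_all_iff.mpr hbd
    filter_upwards [this] with ω hω
    calc |S n ω| ≤ ∑ t ∈ Finset.range n, |Z t ω| := Finset.abs_sum_le_sum_abs _ _
    _ ≤ ∑ t ∈ Finset.range n, 1 := Finset.sum_le_sum fun t _ => hω t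
    _ = n := by simp
  -- integrability of bounded strongly measurable functions
  have intBd : ∀ (f : Ω → ℝ) (C : ℝ), StronglyMeasurable f → (∀ᵐ ω ∂μ, |f ω| ≤ C) →
      Integrable f μ := by
    intro f C hf hC
    exact Integrable.mono' (integrable_const C) hf.aestronglyMeasurable
      (by filter_upwards [hC] with ω h using by simpa using h)
  have intZ : ∀ t, Integrable (Z t) μ := fun t => intBd _ 1 (hSMm t) (hbd t)
  have intS : ∀ n, Integrable (S n) μ := fun n => intBd _ n (hSMSm n) (hbdS n)
  -- orthogonality
  have orth : ∀ (n : ℕ) (f : Ω → ℝ) (C : ℝ), StronglyMeasurable[ℱ n] f →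
      (∀ᵐ ω ∂μ, |f ω| ≤ C) → ∫ ω, f ω * Z n ω ∂μ = 0 := by
    intro n f C hf hC
    have hfm : StronglyMeasurable f := hf.mono (ℱ.le n)
    have hfg : Integrable (f * Z n) μ := by
      apply intBd _ (C * 1) (hfm.mul (hSMm n))
      filter_upwards [hC, hbd n] with ω h1 h2
      calc |f ω * Z n ω| = |f ω| * |Z n ω| := abs_mul _ _
      _ ≤ C * 1 := mul_le_mul h1 h2 (abs_nonneg _) ((abs_nonneg _).trans h1)
    calc ∫ ω, f ω * Z n ω ∂μ = ∫ ω, (f * Z n) ω ∂μ := rfl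
    _ = ∫ ω, (μ[f * Z n | ℱ n]) ω ∂μ := (integral_condExp (ℱ.le n)).symm
    _ = ∫ ω, (f * μ[Z n | ℱ n]) ω ∂μ :=
        integral_congr_ae (condExp_mul_of_stronglyMeasurable_left hf hfg (intZ n))
    _ = 0 := by
        rw [← integral_zero Ω ℝ (μ := μ)]
        apply integral_congr_ae
        filter_upwards [hcond n] with ω h
        simp [h]
  -- second moment
  have ES2 : ∀ n, (∫ ω, (S n ω)^2 ∂μ) ≤ n := by
    intro n
    induction n with
    | zero => simp [hS]
    | succ n ih =>
      have hsq : ∀ ω, (S (n+1) ω)^2 = (S n ω)^2 + 2 * (S n ω * Z n ω) + (Z n ω)^2 := by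
        intro ω
        simp only [hS, Finset.sum_range_succ]
        ring
      have i1 : Integrable (fun ω => (S n ω)^2) μ := by
        apply intBd _ ((n:ℝ)^2) ((hSMSm n).pow 2)
        filter_upwards [hbdS n] with ω h
        simpa [abs_pow, sq_abs] using pow_le_pow_left₀ (abs_nonneg _) h 2
      have i2 : Integrable (fun ω => 2 * (S n ω * Z n ω)) μ := by
        apply intBd _ (2 * ((n:ℝ)*1)) (((hSMSm n).mul (hSMm n)).const_mul 2)
        filter_upwards [hbdS n, hbd n] with ω h1 h2
        show |2 * (S n ω * Z n ω)| ≤ 2 * ((n:ℝ) * 1)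
        have e : |2 * (S n ω * Z n ω)| = 2 * (|S n ω| * |Z n ω|) := by
          rw [abs_mul, abs_mul, abs_two]
        rw [e]
        gcongr
      have i3 : Integrable (fun ω => (Z n ω)^2) μ := by
        apply intBd _ 1 ((hSMm n).pow 2)
        filter_upwards [hbd n] with ω h
        simpa [abs_pow, sq_abs] using pow_le_pow_left₀ (abs_nonneg _) h 2
      have i12 : Integrable (fun ω => (S n ω)^2 + 2 * (S n ω * Z n ω)) μ := i1.add i2
      have hint : (∫ ω, (S (n+1) ω)^2 ∂μ)
          = (∫ ω, (S n ω)^2 ∂μ) + (∫ ω, 2 * (S n ω * Z n ω) ∂μ) + ∫ ω, (Z n ω)^2 ∂μ := by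
        calc (∫ ω, (S (n+1) ω)^2 ∂μ)
            = ∫ ω, ((S n ω)^2 + 2 * (S n ω * Z n ω) + (Z n ω)^2) ∂μ :=
              integral_congr_ae (Eventually.of_forall fun ω => hsq ω)
          _ = (∫ ω, ((S n ω)^2 + 2 * (S n ω * Z n ω)) ∂μ) + ∫ ω, (Z n ω)^2 ∂μ :=
              integral_add i12 i3
          _ = _ := by rw [integral_add i1 i2]
      have hZ2 : (∫ ω, (Z n ω)^2 ∂μ) ≤ 1 := by
        calc (∫ ω, (Z n ω)^2 ∂μ) ≤ ∫ _, (1:ℝ) ∂μ := by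
              apply integral_mono_ae i3 (integrable_const 1)
              filter_upwards [hbd n] with ω h
              simpa [sq_abs] using pow_le_pow_left₀ (abs_nonneg _) h 2
        _ = 1 := by simp
      have horth : (∫ ω, 2 * (S n ω * Z n ω) ∂μ) = 0 := by
        rw [integral_const_mul, orth n (S n) n (hSMS n) (hbdS n)]
        ring
      rw [hint, horth]
      push_cast
      linarith
  -- fourth moment
  intro n
  induction n with
  | zero => simp [hS]
  | succ n ih =>
    have hZ2 : ∀ᵐ ω ∂μ, (Z n ω)^2 ≤ 1 := by
      filter_upwards [hbd n] with ω h
      simpa [sq_abs] using pow_le_pow_left₀ (abs_nonneg _) h 2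
    have i4 : Integrable (fun ω => (S n ω)^4) μ := by
      apply intBd _ ((n:ℝ)^4) ((hSMSm n).pow 4)
      filter_upwards [hbdS n] with ω h
      simpa [abs_pow, sq_abs] using pow_le_pow_left₀ (abs_nonneg _) h 4
    have i31 : Integrable (fun ω => 4 * ((S n ω)^3 * Z n ω)) μ := by
      apply intBd _ (4 * ((n:ℝ)^3 * 1)) ((((hSMSm n).pow 3).mul (hSMm n)).const_mul 4)
      filter_upwards [hbdS n, hbd n] with ω h1 h2
      show |4 * ((S n ω)^3 * Z n ω)| ≤ 4 * ((n:ℝ)^3 * 1)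
      have e : |4 * ((S n ω)^3 * Z n ω)| = 4 * (|S n ω|^3 * |Z n ω|) := by
        rw [abs_mul, abs_mul, abs_pow]
        norm_num
      rw [e]
      gcongr
    have i2 : Integrable (fun ω => 8 * (S n ω)^2) μ := by
      apply intBd _ (8 * (n:ℝ)^2) (((hSMSm n).pow 2).const_mul 8)
      filter_upwards [hbdS n] with ω h
      show |8 * (S n ω)^2| ≤ 8 * (n:ℝ)^2
      rw [abs_mul]
      have : |(S n ω)^2| = |S n ω|^2 := by rw [abs_pow]
      rw [this]
      have h8 : |(8:ℝ)| = 8 := by norm_num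
      rw [h8]
      gcongr
    have inew : Integrable (fun ω => (S (n+1) ω)^4) μ := by
      apply intBd _ (((n:ℝ)+1)^4) ((hSMSm (n+1)).pow 4)
      filter_upwards [hbdS (n+1)] with ω h
      have := pow_le_pow_left₀ (abs_nonneg _) h 4
      push_cast at this ⊢
      simpa [abs_pow] using this
    have irhs : Integrable
        (fun ω => (S n ω)^4 + 4 * ((S n ω)^3 * Z n ω) + 8 * (S n ω)^2 + 3) μ :=
      ((i4.add i31).add i2).add (integrable_const 3)
    have key : (∫ ω, (S (n+1) ω)^4 ∂μ)
        ≤ ∫ ω, ((S n ω)^4 + 4 * ((S n ω)^3 * Z n ω) + 8 * (S n ω)^2 + 3) ∂μ := by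
      apply integral_mono_ae inew irhs
      filter_upwards [hZ2] with ω h
      have e : S (n+1) ω = S n ω + Z n ω := by
        simp only [hS, Finset.sum_range_succ]
      rw [e]
      have := ptwise (S n ω) (Z n ω) h
      linarith
    have i12 : Integrable (fun ω => (S n ω)^4 + 4 * ((S n ω)^3 * Z n ω)) μ := i4.add i31
    have i123 : Integrable
        (fun ω => (S n ω)^4 + 4 * ((S n ω)^3 * Z n ω) + 8 * (S n ω)^2) μ := i12.add i2
    have split : (∫ ω, ((S n ω)^4 + 4 * ((S n ω)^3 * Z n ω) + 8 * (S n ω)^2 + 3) ∂μ)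
        = (∫ ω, (S n ω)^4 ∂μ) + (∫ ω, 4 * ((S n ω)^3 * Z n ω) ∂μ)
          + (∫ ω, 8 * (S n ω)^2 ∂μ) + ∫ _, (3:ℝ) ∂μ := by
      rw [integral_add i123 (integrable_const 3), integral_add i12 i2, integral_add i4 i31]
    have hb3 : ∀ᵐ ω ∂μ, |(S n ω)^3| ≤ (n:ℝ)^3 := by
      filter_upwards [hbdS n] with ω h
      rw [abs_pow]
      exact pow_le_pow_left₀ (abs_nonneg _) h 3
    have horth : (∫ ω, 4 * ((S n ω)^3 * Z n ω) ∂μ) = 0 := by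
      have h0 := orth n (fun ω => (S n ω)^3) ((n:ℝ)^3) ((hSMS n).pow 3) hb3
      rw [integral_const_mul, h0, mul_zero]
    have hS2 : (∫ ω, 8 * (S n ω)^2 ∂μ) ≤ 8 * (n:ℝ) := by
      rw [integral_const_mul]
      have h := ES2 n
      linarith
    have h3 : (∫ _, (3:ℝ) ∂μ) = 3 := by simp
    show (∫ ω, (S (n+1) ω)^4 ∂μ) ≤ 4 * ((n+1 : ℕ):ℝ)^2
    calc (∫ ω, (S (n+1) ω)^4 ∂μ)
        ≤ (∫ ω, (S n ω)^4 ∂μ) + (∫ ω, 4 * ((S n ω)^3 * Z n ω) ∂μ)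
          + (∫ ω, 8 * (S n ω)^2 ∂μ) + ∫ _, (3:ℝ) ∂μ := by rw [← split]; exact key
      _ ≤ 4 * (n:ℝ)^2 + 0 + 8 * (n:ℝ) + 3 := by
          rw [horth, h3]
          have ih' : (∫ ω, (S n ω)^4 ∂μ) ≤ 4 * (n:ℝ)^2 := ih
          exact add_le_add (add_le_add (add_le_add ih' le_rfl) hS2) le_rfl
      _ ≤ 4 * ((n:ℕ)+1:ℝ)^2 := by push_cast; nlinarith [sq_nonneg (n:ℝ)]
      _ = 4 * ((n+1 : ℕ):ℝ)^2 := by push_cast; ring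

/-- Proposition 5: random losses and non-coinciding malicious
attacks (`l_R(t)·l_M(t) = 0` a.s.). If `1 − p₀ + σ_M ≤ 1`, the overall loss
process satisfies `∑ₖ P(L(k) < σ k) < ∞` for every `σ ∈ (0, 1 − p₀ + σ_M)`. -/
theorem combined_disjoint_loss_lower_tail_summable
    {Ω : Type*} [MeasurableSpace Ω] (μ : Measure Ω) [IsProbabilityMeasure μ]
    (ℱ : Filtration ℕ (inferInstance : MeasurableSpace Ω))
    (p₀ : ℝ) (hp₀ : p₀ ∈ Set.Ioo (0 : ℝ) 1)
    (σM : ℝ) (hσM : σM ∈ Set.Ioo (0 : ℝ) 1)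
    (hle : 1 - p₀ + σM ≤ 1)
    (lR lM : ℕ → Ω → ℝ)
    (hR01 : ∀ t ω, lR t ω = 0 ∨ lR t ω = 1)
    (hM01 : ∀ t ω, lM t ω = 0 ∨ lM t ω = 1)
    (hadapted : Adapted ℱ lR)
    (hcond0 : ∀ t, (μ[Set.indicator {ω | lR (t + 1) ω = 0} (fun _ => (1 : ℝ)) | ℱ t])
      ≤ᵐ[μ] fun _ => p₀)
    (hMsum : (∑' k : ℕ,
      μ {ω | (∑ t ∈ Finset.range (k + 1), lM t ω) < σM * (k + 1 : ℕ)}) < ⊤)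
    (hdisj : ∀ᵐ ω ∂μ, ∀ t : ℕ, lR t ω * lM t ω = 0)
    (l : ℕ → Ω → ℝ)
    (hl : ∀ t ω, l t ω = lR t ω + (1 - lR t ω) * lM t ω)
    (σ : ℝ) (hσ : σ ∈ Set.Ioo (0 : ℝ) (1 - p₀ + σM)) :
    (∑' k : ℕ,
      μ {ω | (∑ t ∈ Finset.range (k + 1), l t ω) < σ * (k + 1 : ℕ)}) < ⊤ := by
  obtain ⟨hp0, hp1⟩ := hp₀
  obtain ⟨hσM0, hσM1⟩ := hσM
  obtain ⟨hσ0, hσlt⟩ := hσ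
  set c : ℝ := σ - σM with hc
  clear_value c
  have hη : (0:ℝ) < 1 - p₀ - c := by simp only [hc]; linarith
  set η : ℝ := 1 - p₀ - c with hηdef
  clear_value η
  -- the centered increments
  set Y : ℕ → Ω → ℝ := fun t ω => 1 - lR (t+1) ω with hYdef
  have hYeq : ∀ t, Set.indicator {ω | lR (t + 1) ω = 0} (fun _ => (1 : ℝ)) = Y t := by
    intro t
    funext ω
    rcases hR01 (t+1) ω with h | h
    · simp [Set.indicator_apply, hYdef, h]
    · simp [Set.indicator_apply, hYdef, h]
  have hcond' : ∀ t, (μ[Y t | ℱ t]) ≤ᵐ[μ] fun _ => p₀ := by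
    intro t
    have := hcond0 t
    rwa [hYeq t] at this
  have hY01 : ∀ t ω, 0 ≤ Y t ω ∧ Y t ω ≤ 1 := by
    intro t ω
    rcases hR01 (t+1) ω with h | h <;> simp [hYdef, h]
  have hSMY : ∀ t, StronglyMeasurable[ℱ (t+1)] (Y t) :=
    fun t => stronglyMeasurable_const.sub (hadapted (t+1)).stronglyMeasurable
  have intY : ∀ t, Integrable (Y t) μ := by
    intro t
    refine Integrable.mono' (integrable_const (1:ℝ))
      ((hSMY t).mono (ℱ.le _)).aestronglyMeasurable (ae_of_all _ fun ω => ?_)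
    rw [Real.norm_eq_abs, abs_le]
    constructor <;> linarith [(hY01 t ω).1, (hY01 t ω).2]
  set CE : ℕ → Ω → ℝ := fun t => μ[Y t | ℱ t] with hCEdef
  set Z : ℕ → Ω → ℝ := fun t => Y t - CE t with hZdef
  have hSMZ : ∀ t, StronglyMeasurable[ℱ (t+1)] (Z t) := fun t =>
    (hSMY t).sub (stronglyMeasurable_condExp.mono (ℱ.mono t.le_succ))
  have hCE0 : ∀ t, (0:Ω → ℝ) ≤ᵐ[μ] CE t := fun t =>
    condExp_nonneg (ae_of_all _ fun ω => (hY01 t ω).1)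
  have hbdZ : ∀ t, ∀ᵐ ω ∂μ, |Z t ω| ≤ 1 := by
    intro t
    filter_upwards [hCE0 t, hcond' t] with ω h0 h1
    have h1' : CE t ω ≤ p₀ := h1
    have h0' : (0:ℝ) ≤ CE t ω := h0
    simp only [hZdef, Pi.sub_apply, abs_le]
    constructor <;> [skip; skip] <;>
      first
      | (have := (hY01 t ω).1; have := (hY01 t ω).2; constructor) <;> linarith
      | (have := (hY01 t ω).1; have := (hY01 t ω).2; linarith)
  have hcondZ : ∀ t, (μ[Z t | ℱ t]) =ᵐ[μ] 0 := by
    intro t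
    have h1 : (μ[Z t | ℱ t]) =ᵐ[μ] μ[Y t | ℱ t] - μ[CE t | ℱ t] :=
      condExp_sub (intY t) integrable_condExp _
    have h2 : μ[CE t | ℱ t] = CE t :=
      condExp_of_stronglyMeasurable (ℱ.le t) stronglyMeasurable_condExp integrable_condExp
    filter_upwards [h1] with ω hω
    rw [hω, Pi.sub_apply, h2]
    simp [hCEdef]
  -- partial sums of Z
  set S : ℕ → Ω → ℝ := fun n ω => ∑ t ∈ Finset.range n, Z t ω with hSdef
  have moment := aux_moment4 μ ℱ Z hSMZ hbdZ hcondZ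
  have hSMS : ∀ n, StronglyMeasurable (S n) := by
    intro n
    apply Finset.stronglyMeasurable_fun_sum
    intro t _
    exact (hSMZ t).mono (ℱ.le _)
  have hbdS : ∀ n, ∀ᵐ ω ∂μ, |S n ω| ≤ n := by
    intro n
    filter_upwards [ae_all_iff.mpr hbdZ] with ω hω
    calc |S n ω| ≤ ∑ t ∈ Finset.range n, |Z t ω| := Finset.abs_sum_le_sum_abs _ _
    _ ≤ ∑ t ∈ Finset.range n, 1 := Finset.sum_le_sum fun t _ => hω t
    _ = n := by simp
  -- Markov inequality with fourth moments
  have markov : ∀ (m : ℕ) (a : ℝ), 0 < a →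
      μ {ω | a ≤ S m ω} ≤ ENNReal.ofReal (4 * (m:ℝ)^2 / a^4) := by
    intro m a ha
    have int4 : Integrable (fun ω => (S m ω)^4) μ := by
      refine Integrable.mono' (integrable_const ((m:ℝ)^4))
        ((hSMS m).pow 4).aestronglyMeasurable ?_
      filter_upwards [hbdS m] with ω h
      rw [Real.norm_eq_abs, abs_pow]
      exact pow_le_pow_left₀ (abs_nonneg _) h 4
    have hnn : 0 ≤ᵐ[μ] fun ω => (S m ω)^4 := ae_of_all _ fun ω => by positivity
    have hmk := mul_meas_ge_le_integral_of_nonneg hnn int4 (a^4)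
    have hsub : {ω | a ≤ S m ω} ⊆ {ω | a^4 ≤ (S m ω)^4} := by
      intro ω hω
      exact pow_le_pow_left₀ ha.le hω 4
    have hmono : μ {ω | a ≤ S m ω} ≤ μ {ω | a^4 ≤ (S m ω)^4} := measure_mono hsub
    have hne : μ {ω | a ≤ S m ω} ≠ ⊤ := measure_ne_top μ _
    rw [ENNReal.le_ofReal_iff_toReal_le hne (by positivity)]
    have ha4 : (0:ℝ) < a^4 := by positivity
    rw [le_div_iff₀ ha4]
    calc (μ {ω | a ≤ S m ω}).toReal * a ^ 4
        ≤ (μ {ω | a^4 ≤ (S m ω)^4}).toReal * a^4 :=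
          mul_le_mul_of_nonneg_right
            (ENNReal.toReal_mono (measure_ne_top μ _) hmono) ha4.le
      _ = a^4 * (μ {ω | a^4 ≤ (S m ω)^4}).toReal := mul_comm _ _
      _ ≤ ∫ ω, (S m ω)^4 ∂μ := hmk
      _ ≤ 4 * (m:ℝ)^2 := moment m
  -- choice of N
  obtain ⟨N₀, hN₀⟩ := exists_nat_ge (2 * max c 0 / η)
  set N : ℕ := max N₀ 1 with hNdef
  -- events
  set A : ℕ → Set Ω :=
    fun k => {ω | (∑ t ∈ Finset.range (k+1), lR t ω) < c * ((k:ℝ)+1)} with hA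
  set B : ℕ → Set Ω :=
    fun k => {ω | (∑ t ∈ Finset.range (k + 1), lM t ω) < σM * (k + 1 : ℕ)} with hB
  have hincl : ∀ k, N ≤ k → A k ≤ᵐ[μ] {ω | (η/2) * k ≤ S k ω} := by
    intro k hk
    filter_upwards [ae_all_iff.mpr hcond'] with ω hω hmem
    have hmem' : (∑ t ∈ Finset.range (k+1), lR t ω) < c * ((k:ℝ)+1) := hmem
    have hk1 : (1:ℝ) ≤ (k:ℝ) := by
      exact_mod_cast le_trans (le_max_right N₀ 1) hk
    have hcast : (N₀:ℝ) ≤ (k:ℝ) := by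
      exact_mod_cast le_trans (le_max_left N₀ 1) hk
    have h1 : 2 * max c 0 / η ≤ (k:ℝ) := le_trans hN₀ hcast
    have h2 : max c 0 ≤ η/2 * k := by
      rw [div_le_iff₀ hη] at h1
      have e : η/2 * (k:ℝ) = ((k:ℝ) * η)/2 := by ring
      rw [e]
      linarith
    have hcm : c ≤ max c 0 := le_max_left _ _
    have hCEs : (∑ t ∈ Finset.range k, CE t ω) ≤ p₀ * k := by
      calc (∑ t ∈ Finset.range k, CE t ω) ≤ ∑ _t ∈ Finset.range k, p₀ :=
            Finset.sum_le_sum fun t _ => hω t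
      _ = p₀ * k := by simp [mul_comm]
    have hsplit : (∑ t ∈ Finset.range (k+1), lR t ω)
        = lR 0 ω + ∑ t ∈ Finset.range k, lR (t+1) ω := by
      rw [Finset.sum_range_succ']
      ring
    have hsum2 : (∑ t ∈ Finset.range k, lR (t+1) ω)
        = (k:ℝ) - S k ω - ∑ t ∈ Finset.range k, CE t ω := by
      have e1 : ∀ t, lR (t+1) ω = 1 - (Z t ω + CE t ω) := by
        intro t
        simp only [hZdef, Pi.sub_apply, hYdef]
        ring
      rw [Finset.sum_congr rfl fun t _ => e1 t]
      rw [Finset.sum_sub_distrib, Finset.sum_add_distrib]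
      simp only [Finset.sum_const, Finset.card_range, nsmul_eq_mul, mul_one]
      simp only [hSdef]
      ring
    have hlR0 : 0 ≤ lR 0 ω := by
      rcases hR01 0 ω with h | h <;> rw [h] <;> norm_num
    show (η/2) * k ≤ S k ω
    have e3 : η * (k:ℝ) = (k:ℝ) - p₀*(k:ℝ) - c*(k:ℝ) := by rw [hηdef]; ring
    have e4 : c * ((k:ℝ)+1) = c*(k:ℝ) + c := by ring
    have e5 : η / 2 * (k:ℝ) = η * (k:ℝ) / 2 := by ring
    linarith [hmem', hsplit, hsum2, hCEs, hlR0, h2, hcm, e3, e4, e5]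
  have hk0pos : ∀ k : ℕ, N ≤ k → (0:ℝ) < (η/2) * k := by
    intro k hk
    have hk1 : (1:ℝ) ≤ (k:ℝ) := by
      exact_mod_cast le_trans (le_max_right N₀ 1) hk
    have : (0:ℝ) < η/2 := by linarith
    positivity
  have hAk : ∀ k, N ≤ k →
      μ (A k) ≤ ENNReal.ofReal (4 * (k:ℝ)^2 / ((η/2) * k)^4) := by
    intro k hk
    exact le_trans (measure_mono_ae (hincl k hk)) (markov k _ (hk0pos k hk))
  -- uniform bound
  set D : ℝ := max (256 / η^4) ((N:ℝ)^2) with hD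
  have hbound : ∀ k, μ (A k) ≤ ENNReal.ofReal (D / ((k:ℝ)+1)^2) := by
    intro k
    rcases le_or_gt N k with hk | hk
    · refine le_trans (hAk k hk) (ENNReal.ofReal_le_ofReal ?_)
      have hk1 : (1:ℝ) ≤ (k:ℝ) := by
        exact_mod_cast le_trans (le_max_right N₀ 1) hk
      have hkpos : (0:ℝ) < (k:ℝ) := lt_of_lt_of_le one_pos hk1
      have hηne : η ≠ 0 := ne_of_gt hη
      have e : 4 * (k:ℝ)^2 / ((η/2) * k)^4 = 64 / (η^4 * (k:ℝ)^2) := by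
        field_simp
        ring
      rw [e]
      have hDge : 256 / η^4 ≤ D := le_max_left _ _
      have h256 : 256 ≤ D * η^4 := by
        rw [div_le_iff₀ (by positivity)] at hDge
        linarith
      rw [div_le_div_iff₀ (by positivity) (by positivity)]
      nlinarith [mul_le_mul_of_nonneg_right h256 (sq_nonneg (k:ℝ)), hk1,
        sq_nonneg ((k:ℝ) - 1), sq_nonneg ((k:ℝ) + 1)]
    · have hp1' : μ (A k) ≤ 1 := prob_le_one
      refine le_trans hp1' ?_
      rw [← ENNReal.ofReal_one]
      apply ENNReal.ofReal_le_ofReal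
      have hkN : ((k:ℝ)+1) ≤ (N:ℝ) := by
        exact_mod_cast Nat.succ_le_of_lt hk
      have hk0 : (0:ℝ) ≤ (k:ℝ)+1 := by positivity
      have hsq : ((k:ℝ)+1)^2 ≤ (N:ℝ)^2 := by nlinarith
      have hDge : ((N:ℝ))^2 ≤ D := le_max_right _ _
      rw [le_div_iff₀ (by positivity)]
      linarith
  have hsumD : Summable (fun k : ℕ => D / ((k:ℝ)+1)^2) := by
    have h : Summable (fun n : ℕ => 1 / (n:ℝ)^2) :=
      (Real.summable_one_div_nat_pow (p := 2)).mpr one_lt_two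
    have h2 : Summable (fun k : ℕ => 1 / ((k:ℝ)+1)^2) := by
      have h3 := (summable_nat_add_iff 1).mpr h
      refine h3.congr fun n => ?_
      push_cast
      ring
    have h4 := h2.mul_left D
    refine h4.congr fun n => ?_
    rw [mul_one_div]
  have hAsum : (∑' k, μ (A k)) < ⊤ := by
    calc (∑' k, μ (A k)) ≤ ∑' k : ℕ, ENNReal.ofReal (D / ((k:ℝ)+1)^2) :=
          ENNReal.tsum_le_tsum hbound
    _ = ENNReal.ofReal (∑' k : ℕ, D / ((k:ℝ)+1)^2) :=
          (ENNReal.ofReal_tsum_of_nonneg (fun k => by positivity) hsumD).symm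
    _ < ⊤ := ENNReal.ofReal_lt_top
  -- main event inclusion
  have hEv : ∀ k, {ω | (∑ t ∈ Finset.range (k + 1), l t ω) < σ * (k + 1 : ℕ)}
      ≤ᵐ[μ] ((A k ∪ B k) : Set Ω) := by
    intro k
    filter_upwards [hdisj] with ω hω hmem
    have hmem' : (∑ t ∈ Finset.range (k+1), l t ω) < σ * ((k:ℝ)+1) := by
      have : ((k+1 : ℕ):ℝ) = (k:ℝ)+1 := by push_cast; ring
      rw [← this]
      exact hmem
    have hlsum : (∑ t ∈ Finset.range (k+1), l t ω)
        = (∑ t ∈ Finset.range (k+1), lR t ω) + ∑ t ∈ Finset.range (k+1), lM t ω := by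
      rw [← Finset.sum_add_distrib]
      refine Finset.sum_congr rfl fun t _ => ?_
      rw [hl t ω]
      linear_combination -(hω t)
    rcases lt_or_ge (∑ t ∈ Finset.range (k+1), lR t ω) (c * ((k:ℝ)+1)) with h | h
    · exact Set.mem_union_left _ h
    · refine Set.mem_union_right _ ?_
      show (∑ t ∈ Finset.range (k+1), lM t ω) < σM * ((k+1:ℕ):ℝ)
      have hcs : c * ((k:ℝ)+1) + σM * ((k:ℝ)+1) = σ * ((k:ℝ)+1) := by
        rw [hc]; ring
      push_cast
      linarith
  calc (∑' k : ℕ, μ {ω | (∑ t ∈ Finset.range (k + 1), l t ω) < σ * (k + 1 : ℕ)})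
      ≤ ∑' k : ℕ, (μ (A k) + μ (B k)) :=
        ENNReal.tsum_le_tsum fun k =>
          le_trans (measure_mono_ae (hEv k)) (measure_union_le _ _)
    _ = (∑' k, μ (A k)) + ∑' k, μ (B k) := ENNReal.tsum_add
    _ < ⊤ := ENNReal.add_lt_top.mpr ⟨hAsum, hMsum⟩
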